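/- If α < ε₀ (as an actual well-ordered ordinal) then for every f: ℕ → ℕ the computation of F_{α,f}(x) terminates for all x: there exists l with K_f^{(l)}(⟨α⟩, x) = (⟨⟩, y) for some y. (Proof: the map (σ,x) ↦ h(σ,x) = Σ_i ω^{σ_i} strictly decreases below ω^α at each step while positive.) -/

import Mathlib

open Ordinal

/-- One step `K_f` of the canonical computation of the fast-growing hierarchy
relative to `f`, on a stack of ordinal notations below `ε₀` (head = topmost
entry `α_n`) together with a natural number argument:
`K_f(α₀…α_n, x) = (α₀…α_{n-1}, f(x))` if `α_n = 0`;
`(α₀…α_{n-1} β…β (x+1 copies), 1)` if `α_n = β+1`;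
`(α₀…α_{n-1} α_n[x], x)` if `α_n` is a limit; and `K_f(⟨⟩, x) = (⟨⟩, x)`. -/
def Kstep (f : ℕ → ℕ) : List ONote × ℕ → List ONote × ℕ
  | ([], x) => ([], x)
  | (α :: rest, x) =>
    match α.fundamentalSequence with
    | Sum.inl none => (rest, f x)
    | Sum.inl (some β) => (List.replicate (x + 1) β ++ rest, 1)
    | Sum.inr g => (g x :: rest, x)

/-- The ordinal `h(α₀…α_n, x) = ω^{α₀} + ⋯ + ω^{α_n}` associated to a stack
(head of the list is the topmost entry `α_n`); `h(⟨⟩, x) = 0`. -/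
noncomputable def hOrd (σ : List ONote) : Ordinal.{0} :=
  σ.foldr (fun α acc => acc + omega0 ^ α.repr) 0

/-- `F_{α,f}(x) = y`: the iteration of the one-step computation `K_f` starting
from `(⟨α⟩, x)` reaches the empty stack with value `y`. -/
def Fval (f : ℕ → ℕ) (α : ONote) (x y : ℕ) : Prop :=
  ∃ l : ℕ, (Kstep f)^[l] ([α], x) = ([], y)

lemma hOrd_cons (α : ONote) (rest : List ONote) :
    hOrd (α :: rest) = hOrd rest + omega0 ^ α.repr := rfl

lemma hOrd_replicate (n : ℕ) (β : ONote) (rest : List ONote) :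
    hOrd (List.replicate n β ++ rest) = hOrd rest + omega0 ^ β.repr * n := by
  induction n with
  | zero => simp [hOrd]
  | succ n ih =>
      rw [List.replicate_succ, List.cons_append, hOrd_cons, ih, Nat.cast_succ,
        mul_add, mul_one, add_assoc]

lemma main (f : ℕ → ℕ) : ∀ (o : Ordinal) (σ : List ONote), hOrd σ = o →
    (∀ a ∈ σ, a.NF) → ∀ x, ∃ l y, (Kstep f)^[l] (σ, x) = ([], y) := by
  intro o
  induction o using Ordinal.induction with
  | h o IH =>
    rintro σ rfl hNF x
    match σ with
    | [] => exact ⟨0, x, rfl⟩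
    | α :: rest =>
      have hα : α.NF := hNF α List.mem_cons_self
      have hrest : ∀ a ∈ rest, a.NF := fun a ha => hNF a (List.mem_cons_of_mem _ ha)
      have hprop := ONote.fundamentalSequence_has_prop α
      have hstep : Kstep f (α :: rest, x) =
          match α.fundamentalSequence with
          | Sum.inl none => (rest, f x)
          | Sum.inl (some β) => (List.replicate (x + 1) β ++ rest, 1)
          | Sum.inr g => (g x :: rest, x) := rfl
      rcases hfs : α.fundamentalSequence with (_ | β) | g
      · rw [hfs] at hstep hprop
        have hlt : hOrd rest < hOrd (α :: rest) := by
          rw [hOrd_cons]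
          exact lt_add_of_pos_right _ (opow_pos _ omega0_pos)
        obtain ⟨l, y, hl⟩ := IH _ hlt rest rfl hrest (f x)
        exact ⟨l + 1, y, by rw [Function.iterate_succ_apply, hstep, hl]⟩
      · rw [hfs] at hstep hprop
        obtain ⟨hsucc, hβNF⟩ := hprop
        have hlt : hOrd (List.replicate (x + 1) β ++ rest) < hOrd (α :: rest) := by
          rw [hOrd_replicate, hOrd_cons, hsucc, Order.succ_eq_add_one, opow_add, opow_one]
          exact (add_lt_add_iff_left _).2 (mul_lt_mul_of_pos_left (nat_lt_omega0 _)
            (opow_pos _ omega0_pos))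
        obtain ⟨l, y, hl⟩ := IH _ hlt _ rfl (by
          intro a ha
          rcases List.mem_append.1 ha with h | h
          · rw [List.eq_of_mem_replicate h]; exact hβNF hα
          · exact hrest a h) 1
        exact ⟨l + 1, y, by rw [Function.iterate_succ_apply, hstep, hl]⟩
      · rw [hfs] at hstep hprop
        obtain ⟨-, hg, -⟩ := hprop
        have hlt : hOrd (g x :: rest) < hOrd (α :: rest) := by
          rw [hOrd_cons, hOrd_cons]
          exact (add_lt_add_iff_left _).2 ((opow_lt_opow_iff_right one_lt_omega0).2
            (ONote.lt_def.1 (hg x).2.1))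
        obtain ⟨l, y, hl⟩ := IH _ hlt _ rfl (by
          intro a ha
          rcases List.mem_cons.1 ha with h | h
          · rw [h]; exact (hg x).2.2 hα
          · exact hrest a h) x
        exact ⟨l + 1, y, by rw [Function.iterate_succ_apply, hstep, hl]⟩

/-- For every ordinal notation `α` (denoting an actual well-ordered ordinal
below `ε₀`) and every `f : ℕ → ℕ`, the computation of `F_{α,f}(x)` terminates
for every `x`. -/
theorem stmt_16 (α : ONote) (hα : α.NF) (f : ℕ → ℕ) (x : ℕ) :
    ∃ l y, (Kstep f)^[l] ([α], x) = ([], y) := by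
  exact main f _ [α] rfl (by simpa using hα) x
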